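/- Let (V,g) be an n-dimensional real vector space with a nondegenerate symmetric bilinear form g, and let A be a symmetric bilinear form on V of rank 2 (i.e., its g-associated endomorphism has rank 2). Then A ∧ A² = (1/2)·tr(A)·(A ∧ A), where ∧ is the Kulkarni–Nomizu product, A² is the bilinear form associated to the square of the g-associated endomorphism of A, and tr(A) is its trace. -/

import Mathlib

variable {V : Type*} [AddCommGroup V] [Module ℝ V]

/-- Kulkarni–Nomizu product of two (0,2)-tensors. -/
def kn (A B : V → V → ℝ) : V → V → V → V → ℝ := fun x1 x2 x3 x4 =>
  A x1 x4 * B x2 x3 + A x2 x3 * B x1 x4 - A x1 x3 * B x2 x4 - A x2 x4 * B x1 x3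

/-- The endomorphism `(X ∧_A Y)Z = A(Y,Z)X − A(X,Z)Y`. -/
def wedgeV (A : V → V → ℝ) (x y z : V) : V := A y z • x - A x z • y

/-- Tachibana tensor `Q(A,T)` of a (0,2)-tensor `A` and a (0,4)-tensor `T`. -/
def Q4 (A : V → V → ℝ) (T : V → V → V → V → ℝ) : V → V → V → V → V → V → ℝ :=
  fun x1 x2 x3 x4 x y =>
    -(T (wedgeV A x y x1) x2 x3 x4) - T x1 (wedgeV A x y x2) x3 x4
      - T x1 x2 (wedgeV A x y x3) x4 - T x1 x2 x3 (wedgeV A x y x4)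

/-- if `rank A = 2` then `A ∧ A² = (1/2)·tr(A)·(A ∧ A)`. -/
theorem stmt_4 {V : Type*} [AddCommGroup V] [Module ℝ V] [FiniteDimensional ℝ V]
    (g A : V →ₗ[ℝ] V →ₗ[ℝ] ℝ)
    (hg : ∀ x y, g x y = g y x)
    (hgnd : ∀ x : V, (∀ y : V, g x y = 0) → x = 0)
    (hA : ∀ x y, A x y = A y x)
    (a : V →ₗ[ℝ] V) (ha : ∀ x y, g (a x) y = A x y)
    (hrank : Module.finrank ℝ (LinearMap.range a) = 2) :
    ∀ x₁ x₂ x₃ x₄ : V,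
      kn (fun u v => A u v) (fun u v => A (a u) v) x₁ x₂ x₃ x₄
        = (1/2 : ℝ) * LinearMap.trace ℝ V a
            * kn (fun u v => A u v) (fun u v => A u v) x₁ x₂ x₃ x₄ := by
  intro x₁ x₂ x₃ x₄
  set W := LinearMap.range a with hW
  let b : Module.Basis (Fin 2) ℝ W := Module.finBasisOfFinrankEq ℝ W hrank
  set e1 : V := (b 0 : V) with he1
  set e2 : V := (b 1 : V) with he2
  -- coordinate functions
  set p : V → ℝ := fun v => b.repr ⟨a v, LinearMap.mem_range_self a v⟩ 0 with hp
  set q : V → ℝ := fun v => b.repr ⟨a v, LinearMap.mem_range_self a v⟩ 1 with hq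
  have hcoord : ∀ w : W, (w : V) = (b.repr w 0) • e1 + (b.repr w 1) • e2 := by
    intro w
    conv_lhs => rw [← b.sum_repr w]
    rw [Fin.sum_univ_two]; rfl
  have hav : ∀ v : V, a v = p v • e1 + q v • e2 := fun v =>
    hcoord ⟨a v, LinearMap.mem_range_self a v⟩
  -- trace of a
  have htr : LinearMap.trace ℝ V a = p e1 + q e2 := by
    have h1 : a = W.subtype ∘ₗ a.rangeRestrict := rfl
    conv_lhs => rw [h1]
    rw [LinearMap.trace_comp_comm']
    rw [LinearMap.trace_eq_matrix_trace ℝ b]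
    rw [Matrix.trace]
    simp only [Fin.sum_univ_two, Matrix.diag, LinearMap.toMatrix_apply,
      LinearMap.comp_apply, Submodule.subtype_apply]
    congr 2
  -- A in coordinates
  have key1 : ∀ v y : V, A v y = p v * g e1 y + q v * g e2 y := by
    intro v y
    rw [← ha v y, hav v]
    simp [smul_eq_mul]
  have key2 : ∀ v y : V, A (a v) y = p v * A e1 y + q v * A e2 y := by
    intro v y
    rw [hav v]
    simp [smul_eq_mul]
  simp only [kn]
  rw [key2 x₁ x₄, key2 x₂ x₃, key2 x₁ x₃, key2 x₂ x₄, htr]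
  rw [key1 x₁ x₄, key1 x₂ x₃, key1 x₁ x₃, key1 x₂ x₄, key1 e1 x₄, key1 e2 x₄,
    key1 e1 x₃, key1 e2 x₃]
  ring
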